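/- (Linearization types in case D₆⁺) Let a, b, c be real numbers with c > 0, b² − 4ac < 0, and b + 2c < 0, and let Hess H denote the 2×2 Hessian matrix of H. Then det Hess H(0,0) = −4 < 0; det Hess H(0, ±1/√(2c)) = 4(b+2c)/c < 0; and det Hess H > 0 at each of the four points (ε₁·√((b+2c)/(b²−4ac)), ε₂·√((b+2a)/(4ac−b²))), ε₁, ε₂ ∈ {+1, −1}. Consequently (0,0) and (0, ±1/√(2c)) are elementary saddles of the Hamiltonian system and the other four singular points are elementary centers of the linearized system. -/

import Mathlib

/-- The Hamiltonian H(x,y) = x² − y² + a·x⁴ + c·y⁴ + b·x²·y². -/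
noncomputable def Hfun (a b c x y : ℝ) : ℝ :=
  x ^ 2 - y ^ 2 + a * x ^ 4 + c * y ^ 4 + b * x ^ 2 * y ^ 2

/-- Second partial derivative ∂²H/∂x² at (x,y). -/
noncomputable def Hxx (a b c x y : ℝ) : ℝ :=
  deriv (fun u => deriv (fun v => Hfun a b c v y) u) x

/-- Second partial derivative ∂²H/∂y² at (x,y). -/
noncomputable def Hyy (a b c x y : ℝ) : ℝ :=
  deriv (fun u => deriv (fun v => Hfun a b c x v) u) y

/-- Mixed second partial derivative ∂²H/∂x∂y at (x,y). -/
noncomputable def Hxy (a b c x y : ℝ) : ℝ :=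
  deriv (fun u => deriv (fun v => Hfun a b c u v) y) x

/-- Determinant of the Hessian matrix of H at (x,y). -/
noncomputable def hessDet (a b c x y : ℝ) : ℝ :=
  Hxx a b c x y * Hyy a b c x y - (Hxy a b c x y) ^ 2

lemma dHx (a b c y : ℝ) (u : ℝ) :
    HasDerivAt (fun v => Hfun a b c v y) (2*u + 4*a*u^3 + 2*b*u*y^2) u := by
  have h := ((((hasDerivAt_pow 2 u).sub_const (y^2)).add
      ((hasDerivAt_pow 4 u).const_mul a)).add_const (c*y^4)).add
      (((hasDerivAt_pow 2 u).const_mul b).mul_const (y^2))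
  have he : (2*u + 4*a*u^3 + 2*b*u*y^2)
      = (↑(2:ℕ) * u ^ (2 - 1) + a * (↑(4:ℕ) * u ^ (4 - 1)) + b * (↑(2:ℕ) * u ^ (2 - 1)) * y ^ 2) := by
    push_cast; ring
  rw [he]; exact h

lemma dHy (a b c x : ℝ) (u : ℝ) :
    HasDerivAt (fun v => Hfun a b c x v) (-(2*u) + 4*c*u^3 + 2*b*x^2*u) u := by
  have h := ((((hasDerivAt_const u (x^2)).sub (hasDerivAt_pow 2 u)).add_const (a*x^4)).add
      ((hasDerivAt_pow 4 u).const_mul c)).add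
      ((hasDerivAt_pow 2 u).const_mul (b*x^2))
  have he : (-(2*u) + 4*c*u^3 + 2*b*x^2*u)
      = (0 - ↑(2:ℕ) * u ^ (2 - 1) + c * (↑(4:ℕ) * u ^ (4 - 1)) + b * x^2 * (↑(2:ℕ) * u ^ (2 - 1))) := by
    push_cast; ring
  rw [he]; exact h

lemma Hxx_eq (a b c x y : ℝ) : Hxx a b c x y = 2 + 12*a*x^2 + 2*b*y^2 := by
  unfold Hxx
  have h1 : (fun u => deriv (fun v => Hfun a b c v y) u)
      = fun u => 2*u + 4*a*u^3 + 2*b*u*y^2 := by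
    funext u; exact (dHx a b c y u).deriv
  rw [h1]
  have h2 := (((hasDerivAt_id x).const_mul 2).add
      ((hasDerivAt_pow 3 x).const_mul (4*a))).add
      (((hasDerivAt_id x).const_mul (2*b)).mul_const (y^2))
  have he : (2 + 12*a*x^2 + 2*b*y^2 : ℝ)
      = (2*1 + 4*a*(↑(3:ℕ)*x^(3-1)) + 2*b*1*y^2) := by push_cast; ring
  rw [he]; exact h2.deriv

lemma Hyy_eq (a b c x y : ℝ) : Hyy a b c x y = -2 + 12*c*y^2 + 2*b*x^2 := by
  unfold Hyy
  have h1 : (fun u => deriv (fun v => Hfun a b c x v) u)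
      = fun u => -(2*u) + 4*c*u^3 + 2*b*x^2*u := by
    funext u; exact (dHy a b c x u).deriv
  rw [h1]
  have h2 := ((((hasDerivAt_id y).const_mul 2).neg.add
      ((hasDerivAt_pow 3 y).const_mul (4*c))).add
      ((hasDerivAt_id y).const_mul (2*b*x^2)))
  have he : (-2 + 12*c*y^2 + 2*b*x^2 : ℝ)
      = (-(2*1) + 4*c*(↑(3:ℕ)*y^(3-1)) + 2*b*x^2*1) := by push_cast; ring
  rw [he]; exact h2.deriv

lemma Hxy_eq (a b c x y : ℝ) : Hxy a b c x y = 4*b*x*y := by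
  unfold Hxy
  have h1 : (fun u => deriv (fun v => Hfun a b c u v) y)
      = fun u => (-(2*y) + 4*c*y^3) + (2*b*u^2)*y := by
    funext u
    rw [(dHy a b c u y).deriv]
  rw [h1]
  have h2 := ((hasDerivAt_const x (-(2*y) + 4*c*y^3))).add
      (((hasDerivAt_pow 2 x).const_mul (2*b)).mul_const y)
  have he : (4*b*x*y : ℝ) = (0 + 2*b*(↑(2:ℕ)*x^(2-1))*y) := by push_cast; ring
  rw [he]; exact h2.deriv

lemma hessDet_eq (a b c x y : ℝ) :
    hessDet a b c x y
      = (2 + 12*a*x^2 + 2*b*y^2) * (-2 + 12*c*y^2 + 2*b*x^2) - (4*b*x*y)^2 := by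
  rw [hessDet, Hxx_eq, Hyy_eq, Hxy_eq]

theorem stmt10 (a b c : ℝ) (hc : 0 < c) (hD : b ^ 2 - 4 * a * c < 0) (hb2c : b + 2 * c < 0) :
    (hessDet a b c 0 0 = -4 ∧ (-4 : ℝ) < 0) ∧
    (hessDet a b c 0 (1 / Real.sqrt (2 * c)) = 4 * (b + 2 * c) / c ∧
     hessDet a b c 0 (-(1 / Real.sqrt (2 * c))) = 4 * (b + 2 * c) / c ∧
     4 * (b + 2 * c) / c < 0) ∧
    (∀ ε₁ ε₂ : ℝ, (ε₁ = 1 ∨ ε₁ = -1) → (ε₂ = 1 ∨ ε₂ = -1) →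
      0 < hessDet a b c (ε₁ * Real.sqrt ((b + 2 * c) / (b ^ 2 - 4 * a * c)))
            (ε₂ * Real.sqrt ((b + 2 * a) / (4 * a * c - b ^ 2)))) := by
  have hb2a : 0 < b + 2 * a := by nlinarith [sq_nonneg b, sq_nonneg (b + 2*c)]
  refine ⟨⟨by rw [hessDet_eq]; ring, by norm_num⟩, ?_, ?_⟩
  · have hs : Real.sqrt (2*c) ^ 2 = 2*c := Real.sq_sqrt (by linarith)
    have hsne : Real.sqrt (2*c) ≠ 0 := by positivity
    have ht2 : (1 / Real.sqrt (2*c))^2 = 1/(2*c) := by rw [div_pow, one_pow, hs]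
    have ht2' : (-(1 / Real.sqrt (2*c)))^2 = 1/(2*c) := by rw [← ht2]; ring
    constructor
    · rw [hessDet_eq, ht2]
      field_simp
      ring
    constructor
    · rw [hessDet_eq, ht2']
      field_simp
      ring
    · apply div_neg_of_neg_of_pos (by linarith) hc
  · intro ε₁ ε₂ h1 h2
    have he1 : ε₁^2 = 1 := by rcases h1 with h|h <;> simp [h]
    have he2 : ε₂^2 = 1 := by rcases h2 with h|h <;> simp [h]
    have hx2 : (ε₁ * Real.sqrt ((b + 2 * c) / (b ^ 2 - 4 * a * c)))^2
        = (b + 2 * c) / (b ^ 2 - 4 * a * c) := by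
      rw [mul_pow, he1, one_mul, Real.sq_sqrt]
      rw [← neg_div_neg_eq]; apply div_nonneg <;> linarith
    have hy2 : (ε₂ * Real.sqrt ((b + 2 * a) / (4 * a * c - b ^ 2)))^2
        = (b + 2 * a) / (4 * a * c - b ^ 2) := by
      rw [mul_pow, he2, one_mul, Real.sq_sqrt]
      apply div_nonneg <;> linarith
    rw [hessDet_eq]
    set X := (ε₁ * Real.sqrt ((b + 2 * c) / (b ^ 2 - 4 * a * c)))
    set Y := (ε₂ * Real.sqrt ((b + 2 * a) / (4 * a * c - b ^ 2)))
    have hEne : b ^ 2 - 4 * a * c ≠ 0 := ne_of_lt hD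
    have hEne' : 4 * a * c - b ^ 2 ≠ 0 := by intro h; apply hEne; linarith
    have hkey : (2 + 12*a*X^2 + 2*b*Y^2) * (-2 + 12*c*Y^2 + 2*b*X^2) - (4*b*X*Y)^2
        = 16 * (b + 2*c) * (b + 2*a) / (b^2 - 4*a*c) := by
      have hsq : (4*b*X*Y)^2 = 16*b^2*X^2*Y^2 := by ring
      rw [hsq, hx2, hy2]
      generalize hE : b ^ 2 - 4 * a * c = E at hEne ⊢
      rw [show 4 * a * c - b ^ 2 = -E by rw [← hE]; ring]
      field_simp
      rw [← hE]
      ring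
    rw [hkey]
    apply div_pos_of_neg_of_neg _ hD
    nlinarith
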